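/- Let X be a Coxeter graph satisfying condition (★) and let x, w ∈ W_c(X). Then the coefficient M(x,w) of q^{-1/2} in L_{x,w}(q^{-1/2}) equals the coefficient μ(x,w) of q^{(ℓ(w)−ℓ(x)−1)/2} in the Kazhdan–Lusztig polynomial P_{x,w}(q). -/

import Mathlib

/-!
Common setup: Coxeter systems, Bruhat order, fully commutative elements,
the Hecke algebra `H(X)`, the generalized Temperley--Lieb algebra `TL(X)`,
and the polynomial families `R`, `P` (Kazhdan--Lusztig), `D`, `a`, `L`.
-/

open LaurentPolynomial Polynomial

noncomputable section

namespace TLPaper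

/-- The ring `A = ℤ[q^{1/2}, q^{-1/2}]`, modelled as Laurent polynomials over `ℤ`
in the variable `T = q^{1/2}`. -/
abbrev A : Type := LaurentPolynomial ℤ

/-- The element `q = (q^{1/2})^2` of `A`. -/
def q : A := LaurentPolynomial.T 2

variable {B : Type*} {W : Type*} [Group W] {M : CoxeterMatrix B} (cs : CoxeterSystem M W)

/-- The Bruhat order on a Coxeter group: the reflexive-transitive closure of the relation
`x → xt` where `t` is a reflection and the length increases. -/
def bruhatLE : W → W → Prop :=
  Relation.ReflTransGen
    (fun x y => (∃ t : W, cs.IsReflection t ∧ y = x * t) ∧ cs.length x < cs.length y)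

/-- Strict Bruhat order. -/
def bruhatLT (x w : W) : Prop := bruhatLE cs x w ∧ x ≠ w

/-- A single commutation move on words: interchanging two adjacent commuting letters
(i.e. letters `i`, `j` with `M i j = 2`). -/
def CommMove (M : CoxeterMatrix B) (l₁ l₂ : List B) : Prop :=
  ∃ (a b : List B) (i j : B), M i j = 2 ∧ l₁ = a ++ i :: j :: b ∧ l₂ = a ++ j :: i :: b

/-- An element `w` is *fully commutative* if any reduced word for `w` can be obtained
from any other by a sequence of commutation moves. -/
def FullyCommutative (w : W) : Prop :=
  ∀ l₁ l₂ : List B, (cs.IsReduced l₁ ∧ cs.wordProd l₁ = w) →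
    (cs.IsReduced l₂ ∧ cs.wordProd l₂ = w) →
    Relation.ReflTransGen (CommMove M) l₁ l₂

/-- All the data of the paper: the Hecke algebra `H` of the Coxeter system `cs` with its
standard basis `Tw`, the `R`-polynomials, the Kazhdan--Lusztig polynomials `P`,
the generalized Temperley--Lieb algebra `TL = H/J` (with `proj` the canonical projection),
the `D`-polynomials, the `a`-polynomials, and the IC basis `c` with its `L`-polynomials.
The polynomial `L x w` is a polynomial in the variable `v = q^{-1/2}`;
all other polynomial families are polynomials in `q`. -/
structure TLContext {B : Type*} {W : Type*} [Group W] {M : CoxeterMatrix B}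
    (cs : CoxeterSystem M W)
    (H : Type*) [Ring H] [Algebra A H] (TL : Type*) [Ring TL] [Algebra A TL] where
  /-- The standard basis `{T_w}` of the Hecke algebra. -/
  Tw : W → H
  Tw_indep : LinearIndependent A Tw
  Tw_span : Submodule.span A (Set.range Tw) = ⊤
  Tw_one : Tw 1 = 1
  /-- Multiplication rule, case `ℓ(ws) > ℓ(w)`. -/
  Tw_mul_simple_of_lt : ∀ (w : W) (i : B),
    cs.length w < cs.length (w * cs.simple i) →
    Tw w * Tw (cs.simple i) = Tw (w * cs.simple i)
  /-- Multiplication rule, case `ℓ(ws) < ℓ(w)`. -/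
  Tw_mul_simple_of_gt : ∀ (w : W) (i : B),
    cs.length (w * cs.simple i) < cs.length w →
    Tw w * Tw (cs.simple i) = q • Tw (w * cs.simple i) + (q - 1) • Tw w
  /-- `Tinv w` is the inverse of `T_w` in `H`. -/
  Tinv : W → H
  Tw_mul_Tinv : ∀ w : W, Tw w * Tinv w = 1
  Tinv_mul_Tw : ∀ w : W, Tinv w * Tw w = 1
  /-- Bruhat lower sets are finite. -/
  finite_bruhatLE : ∀ w : W, {x | bruhatLE cs x w}.Finite
  /-- The `R`-polynomials. -/
  R : W → W → Polynomial ℤ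
  R_self : ∀ w : W, R w w = 1
  R_eq_zero : ∀ x w : W, ¬ bruhatLE cs x w → R x w = 0
  /-- `T_{w⁻¹}⁻¹ = ε_w q^{-ℓ(w)} Σ_{x ≤ w} ε_x R_{x,w}(q) T_x`. -/
  Tinv_eq : ∀ w : W, Tinv w⁻¹ =
    ((-1 : A) ^ cs.length w * LaurentPolynomial.T (-2 * (cs.length w : ℤ))) •
      ∑ᶠ x ∈ {x | bruhatLE cs x w},
        ((-1 : A) ^ cs.length x * Polynomial.aeval q (R x w)) • Tw x
  /-- The Kazhdan--Lusztig polynomials. -/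
  P : W → W → Polynomial ℤ
  P_self : ∀ w : W, P w w = 1
  P_eq_zero : ∀ x w : W, ¬ bruhatLE cs x w → P x w = 0
  /-- `deg P_{x,w} ≤ (ℓ(w) - ℓ(x) - 1)/2` for `x < w`. -/
  P_degree : ∀ x w : W, bruhatLT cs x w →
    2 * (P x w).natDegree + 1 ≤ cs.length w - cs.length x
  /-- The involution `ι` of the Hecke algebra. -/
  iotaH : H →+* H
  iotaH_involutive : ∀ h : H, iotaH (iotaH h) = h
  iotaH_Tw : ∀ w : W, iotaH (Tw w) = Tinv w⁻¹
  iotaH_smul : ∀ (a : A) (h : H),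
    iotaH (a • h) = (LaurentPolynomial.invert (R := ℤ) a) • iotaH h
  /-- `ι` fixes the Kazhdan--Lusztig basis element
  `C'_w = q^{-ℓ(w)/2} Σ_{x ≤ w} P_{x,w}(q) T_x`. -/
  iotaH_KL : ∀ w : W,
    iotaH ((LaurentPolynomial.T (-(cs.length w : ℤ)) : A) •
      ∑ᶠ x ∈ {x | bruhatLE cs x w}, (Polynomial.aeval q (P x w)) • Tw x) =
    (LaurentPolynomial.T (-(cs.length w : ℤ)) : A) •
      ∑ᶠ x ∈ {x | bruhatLE cs x w}, (Polynomial.aeval q (P x w)) • Tw x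
  /-- The canonical projection `σ : H → TL = H/J`. -/
  proj : H →ₐ[A] TL
  proj_surjective : Function.Surjective proj
  /-- The kernel of `σ` is the two-sided ideal `J` generated by the elements
  `Σ_{w ∈ ⟨s_i, s_j⟩} T_w`, over all pairs of non-commuting generators `s_i, s_j`
  such that `s_i s_j` has finite order. -/
  proj_ker : ∀ h : H, proj h = 0 ↔ h ∈ Submodule.span A
    {x : H | ∃ (i j : B) (a b : H), M i j ≠ 0 ∧ M i j ≠ 1 ∧ M i j ≠ 2 ∧
      x = a * (∑ᶠ u ∈ (Subgroup.closure {cs.simple i, cs.simple j} : Set W), Tw u) * b}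
  /-- The images `t_w = σ(T_w)`, `w` fully commutative, are linearly independent. -/
  t_indep : LinearIndependent A
    (fun x : {w : W // FullyCommutative cs w} => proj (Tw x.1))
  /-- The `D`-polynomials. -/
  D : W → W → Polynomial ℤ
  /-- `t_w = Σ_{x ∈ W_c, x ≤ w} D_{x,w}(q) t_x`. -/
  D_eq : ∀ w : W, proj (Tw w) =
    ∑ᶠ x ∈ {x | FullyCommutative cs x ∧ bruhatLE cs x w},
      (Polynomial.aeval q (D x w)) • proj (Tw x)
  D_self : ∀ w : W, FullyCommutative cs w → D w w = 1
  D_eq_zero : ∀ x w : W, ¬ (FullyCommutative cs x ∧ bruhatLE cs x w) → D x w = 0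
  /-- The `a`-polynomials. -/
  apol : W → W → Polynomial ℤ
  /-- `(t_{w⁻¹})⁻¹ = q^{-ℓ(w)} Σ_{y ∈ W_c, y ≤ w} a_{y,w}(q) t_y` for `w ∈ W_c`. -/
  apol_eq : ∀ w : W, FullyCommutative cs w →
    proj (Tinv w⁻¹) = (LaurentPolynomial.T (-2 * (cs.length w : ℤ)) : A) •
      ∑ᶠ y ∈ {y | FullyCommutative cs y ∧ bruhatLE cs y w},
        (Polynomial.aeval q (apol y w)) • proj (Tw y)
  apol_self : ∀ w : W, FullyCommutative cs w → apol w w = 1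
  apol_eq_zero : ∀ y w : W,
    ¬ (FullyCommutative cs y ∧ FullyCommutative cs w ∧ bruhatLE cs y w) → apol y w = 0
  /-- The involution `ι` of the Temperley--Lieb algebra. -/
  iotaTL : TL →+* TL
  iotaTL_involutive : ∀ x : TL, iotaTL (iotaTL x) = x
  iotaTL_t : ∀ w : W, iotaTL (proj (Tw w)) = proj (Tinv w⁻¹)
  iotaTL_smul : ∀ (a : A) (x : TL),
    iotaTL (a • x) = (LaurentPolynomial.invert (R := ℤ) a) • iotaTL x
  /-- The `L`-polynomials: `L x w` is a polynomial in the variable `v = q^{-1/2}`, and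
  `L_{x,w}(q^{-1/2})` is obtained by evaluating it at `T (-1) = q^{-1/2}`. -/
  L : W → W → Polynomial ℤ
  /-- The IC basis `{c_w}` of `TL`. -/
  c : W → TL
  /-- `c_w = Σ_{x ∈ W_c, x ≤ w} q^{-ℓ(x)/2} L_{x,w}(q^{-1/2}) t_x`. -/
  c_eq : ∀ w : W, FullyCommutative cs w →
    c w = ∑ᶠ x ∈ {x | FullyCommutative cs x ∧ bruhatLE cs x w},
      ((LaurentPolynomial.T (-(cs.length x : ℤ)) : A) *
        Polynomial.aeval (R := ℤ) ((LaurentPolynomial.T (-1) : A)) (L x w)) • proj (Tw x)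
  /-- Convention: `c_x = 0` for `x ∉ W_c`. -/
  c_eq_zero : ∀ w : W, ¬ FullyCommutative cs w → c w = 0
  /-- The IC basis is `ι`-invariant. -/
  c_invariant : ∀ w : W, FullyCommutative cs w → iotaTL (c w) = c w
  L_self : ∀ w : W, L w w = 1
  L_eq_zero : ∀ x w : W,
    ¬ (FullyCommutative cs x ∧ FullyCommutative cs w ∧ bruhatLE cs x w) → L x w = 0
  /-- `L_{x,w}(q^{-1/2}) ∈ q^{-1/2} ℤ[q^{-1/2}]` for `x < w`. -/
  L_coeff_zero : ∀ x w : W, bruhatLT cs x w → (L x w).coeff 0 = 0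

namespace TLContext

variable {B : Type*} {W : Type*} [Group W] {M : CoxeterMatrix B} {cs : CoxeterSystem M W}
  {H : Type*} [Ring H] [Algebra A H] {TL : Type*} [Ring TL] [Algebra A TL]
  (Ctx : TLContext cs H TL)

/-- `μ(x,w)`: the coefficient of `q^{(ℓ(w)-ℓ(x)-1)/2}` in the Kazhdan--Lusztig
polynomial `P_{x,w}(q)` (which is zero unless `ℓ(w) - ℓ(x)` is odd). -/
def mu (x w : W) : ℤ :=
  if Odd (cs.length w - cs.length x) then
    (Ctx.P x w).coeff ((cs.length w - cs.length x - 1) / 2)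
  else 0

/-- The Kazhdan--Lusztig basis element `C'_w = q^{-ℓ(w)/2} Σ_{x ≤ w} P_{x,w}(q) T_x`. -/
def KL (w : W) : H :=
  (LaurentPolynomial.T (-(cs.length w : ℤ)) : A) •
    ∑ᶠ x ∈ {x | bruhatLE cs x w}, (Polynomial.aeval q (Ctx.P x w)) • Ctx.Tw x

/-- Condition (★): the projection sends the Kazhdan--Lusztig basis element `C'_w`
to `c_w` if `w ∈ W_c` and to `0` otherwise. -/
def Star : Prop :=
  (∀ w : W, FullyCommutative cs w → Ctx.proj (Ctx.KL w) = Ctx.c w) ∧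
  (∀ w : W, ¬ FullyCommutative cs w → Ctx.proj (Ctx.KL w) = 0)

/-- `L_{x,w}(q^{-1/2})` as an element of `A`. -/
def Lq (x w : W) : A := Polynomial.aeval (R := ℤ) ((LaurentPolynomial.T (-1) : A)) (Ctx.L x w)

/-- `L_{x,w}(q^{1/2})` as an element of `A`. -/
def Lq' (x w : W) : A := Polynomial.aeval (R := ℤ) ((LaurentPolynomial.T 1 : A)) (Ctx.L x w)


/-! ### Auxiliary lemmas -/

lemma algebraMap_int (co : ℤ) : algebraMap ℤ A co = LaurentPolynomial.C co := by
  rw [LaurentPolynomial.algebraMap_apply]; norm_num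

lemma aeval_q_eq_sum (p : Polynomial ℤ) :
    Polynomial.aeval q p
      = ∑ k ∈ p.support, LaurentPolynomial.C (p.coeff k) * LaurentPolynomial.T (2 * (k:ℤ)) := by
  conv_lhs => rw [p.as_sum_support]
  rw [map_sum]
  refine Finset.sum_congr rfl fun k _ => ?_
  rw [Polynomial.aeval_monomial, algebraMap_int, q, T_pow]
  ring_nf

lemma aeval_Tneg_eq_sum (p : Polynomial ℤ) :
    Polynomial.aeval (R := ℤ) (LaurentPolynomial.T (-1)) p
      = ∑ k ∈ p.support, LaurentPolynomial.C (p.coeff k) * LaurentPolynomial.T (-(k:ℤ)) := by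
  conv_lhs => rw [p.as_sum_support]
  rw [map_sum]
  refine Finset.sum_congr rfl fun k _ => ?_
  rw [Polynomial.aeval_monomial, algebraMap_int, T_pow]
  ring_nf

lemma coeff_sum_CT (s : Finset ℕ) (co : ℕ → ℤ) (e : ℕ → ℤ) (n : ℤ) :
    (∑ k ∈ s, LaurentPolynomial.C (co k) * LaurentPolynomial.T (e k) : A).coeff n
      = ∑ k ∈ s, (if e k = n then co k else 0) := by
  rw [AddMonoidAlgebra.coeff_sum, Finset.sum_apply']
  refine Finset.sum_congr rfl fun k _ => ?_
  rw [← single_eq_C_mul_T, AddMonoidAlgebra.coeff_single, Finsupp.single_apply]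

lemma coeffA_aeval_q_even (p : Polynomial ℤ) (k : ℕ) :
    (Polynomial.aeval q p : A).coeff (2 * (k:ℤ)) = p.coeff k := by
  rw [aeval_q_eq_sum, coeff_sum_CT]
  have h1 : ∀ j ∈ p.support, (if 2*(j:ℤ) = 2*(k:ℤ) then p.coeff j else 0)
      = if j = k then p.coeff j else 0 := by
    intro j _; congr 1; simp only [eq_iff_iff]; omega
  rw [Finset.sum_congr rfl h1, Finset.sum_ite_eq' p.support k]
  by_cases h : k ∈ p.support
  · simp [h]
  · simp [h, Polynomial.notMem_support_iff.mp h]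

lemma coeffA_aeval_q_odd (p : Polynomial ℤ) (n : ℤ) (h : ¬ (2 ∣ n)) :
    (Polynomial.aeval q p : A).coeff n = 0 := by
  rw [aeval_q_eq_sum, coeff_sum_CT]
  refine Finset.sum_eq_zero fun j _ => ?_
  rw [if_neg]; omega

lemma coeffA_T_mul_aevalTneg (p : Polynomial ℤ) (m : ℤ) (j : ℕ) :
    ((LaurentPolynomial.T m * Polynomial.aeval (R := ℤ) (LaurentPolynomial.T (-1)) p : A)).coeff
      (m - (j:ℤ)) = p.coeff j := by
  rw [aeval_Tneg_eq_sum, Finset.mul_sum]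
  have h0 : ∀ k ∈ p.support,
      (LaurentPolynomial.T m * (LaurentPolynomial.C (p.coeff k) * LaurentPolynomial.T (-(k:ℤ))) : A)
      = LaurentPolynomial.C (p.coeff k) * LaurentPolynomial.T (m - (k:ℤ)) := by
    intro k _
    rw [T_sub]; ring
  rw [Finset.sum_congr rfl h0, coeff_sum_CT]
  have h1 : ∀ k ∈ p.support, (if m - (k:ℤ) = m - (j:ℤ) then p.coeff k else 0)
      = if k = j then p.coeff k else 0 := by
    intro k _; congr 1; simp only [eq_iff_iff]; omega
  rw [Finset.sum_congr rfl h1, Finset.sum_ite_eq' p.support j]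
  by_cases h : j ∈ p.support
  · simp [h]
  · simp [h, Polynomial.notMem_support_iff.mp h]

lemma aeval_q_injective : Function.Injective (Polynomial.aeval q : Polynomial ℤ → A) := by
  intro a b hab
  ext k
  have := congrArg (fun z : A => z.coeff (2*(k:ℤ))) hab
  simpa only [coeffA_aeval_q_even] using this

lemma length_le_of_bruhatLE {x w : W} (h : bruhatLE cs x w) : cs.length x ≤ cs.length w := by
  induction h with
  | refl => exact le_rfl
  | tail _ h2 ih => exact ih.trans h2.2.le

lemma length_lt_of_bruhatLT {x w : W} (h : bruhatLT cs x w) : cs.length x < cs.length w := by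
  rcases (Relation.ReflTransGen.cases_head h.1) with rfl | ⟨c, hc, hcw⟩
  · exact absurd rfl h.2
  · exact lt_of_lt_of_le hc.2 (length_le_of_bruhatLE hcw)

lemma bruhatLE_refl (x : W) : bruhatLE cs x x := Relation.ReflTransGen.refl

lemma bruhatLE_trans {x y z : W} (h1 : bruhatLE cs x y) (h2 : bruhatLE cs y z) :
    bruhatLE cs x z := Relation.ReflTransGen.trans h1 h2

/-- Coefficient extraction from equal combinations of `t_x`, `x` fully commutative. -/
lemma indep_ext (s : Finset W) (hs : ∀ y ∈ s, FullyCommutative cs y) (f g : W → A)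
    (h : ∑ y ∈ s, f y • Ctx.proj (Ctx.Tw y) = ∑ y ∈ s, g y • Ctx.proj (Ctx.Tw y)) :
    ∀ y ∈ s, f y = g y := by
  intro y hy
  have h0 : ∑ z ∈ s, (f z - g z) • Ctx.proj (Ctx.Tw z) = 0 := by
    simp only [sub_smul, Finset.sum_sub_distrib, h, sub_self]
  let emb : {z : W // z ∈ s} ↪ {v : W // FullyCommutative cs v} :=
    ⟨fun z => ⟨z.1, hs z.1 z.2⟩, fun a b hab => Subtype.ext (by simpa using hab)⟩
  have h1 : ∑ z ∈ s.attach.map emb,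
      (f z.1 - g z.1) • Ctx.proj (Ctx.Tw z.1) = 0 := by
    rw [Finset.sum_map]
    exact (Finset.sum_attach s fun z => (f z - g z) • Ctx.proj (Ctx.Tw z)).trans h0
  have := linearIndependent_iff'.mp Ctx.t_indep (s.attach.map emb)
    (fun v => f v.1 - g v.1) h1 ⟨y, hs y hy⟩
    (Finset.mem_map.mpr ⟨⟨y, hy⟩, Finset.mem_attach _ _, rfl⟩)
  exact sub_eq_zero.mp this

/-- The (finite) Bruhat lower set of `w`, as a `Finset`. -/
def Sb (w : W) : Finset W := (Ctx.finite_bruhatLE w).toFinset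

/-- The set `{x | x fully commutative and x ≤ w}` is finite. -/
def fcset_finite (w : W) :
    Set.Finite {x | FullyCommutative cs x ∧ bruhatLE cs x w} :=
  (Ctx.finite_bruhatLE w).subset fun _ hx => hx.2

/-- The set of fully commutative elements below `w`, as a `Finset`. -/
def Sfc (w : W) : Finset W := (fcset_finite Ctx w).toFinset

lemma mem_Sb {y w : W} : y ∈ Sb Ctx w ↔ bruhatLE cs y w := Set.Finite.mem_toFinset _

lemma mem_Sfc {y w : W} : y ∈ Sfc Ctx w ↔ FullyCommutative cs y ∧ bruhatLE cs y w :=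
  Set.Finite.mem_toFinset _

lemma projT_eq {y w : W} (hyw : bruhatLE cs y w) :
    Ctx.proj (Ctx.Tw y)
      = ∑ x ∈ Sfc Ctx w, (Polynomial.aeval q (Ctx.D x y)) • Ctx.proj (Ctx.Tw x) := by
  rw [Ctx.D_eq y, finsum_mem_eq_finite_toFinset_sum _ (fcset_finite Ctx y)]
  refine Finset.sum_subset ?_ ?_
  · intro x hxy
    rw [Set.Finite.mem_toFinset] at hxy
    exact (mem_Sfc Ctx).mpr ⟨hxy.1, bruhatLE_trans hxy.2 hyw⟩
  · intro x _ hxy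
    rw [Set.Finite.mem_toFinset] at hxy
    rw [Ctx.D_eq_zero x y hxy, map_zero, zero_smul]

lemma projKL_eq (w : W) :
    Ctx.proj (Ctx.KL w) = ∑ x ∈ Sfc Ctx w,
      (LaurentPolynomial.T (-(cs.length w : ℤ))
          * ∑ y ∈ Sb Ctx w, Polynomial.aeval q (Ctx.P y w * Ctx.D x y))
        • Ctx.proj (Ctx.Tw x) := by
  have h1 : Ctx.proj (Ctx.KL w)
      = (LaurentPolynomial.T (-(cs.length w : ℤ)) : A) • ∑ y ∈ Sb Ctx w,
          (Polynomial.aeval q (Ctx.P y w)) • Ctx.proj (Ctx.Tw y) := by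
    rw [TLContext.KL, map_smul,
      finsum_mem_eq_finite_toFinset_sum _ (Ctx.finite_bruhatLE w), map_sum]
    simp only [map_smul]
    rfl
  have h2 : ∀ y ∈ Sb Ctx w, (Polynomial.aeval q (Ctx.P y w)) • Ctx.proj (Ctx.Tw y)
      = ∑ x ∈ Sfc Ctx w,
          (Polynomial.aeval q (Ctx.P y w) * Polynomial.aeval q (Ctx.D x y))
            • Ctx.proj (Ctx.Tw x) := by
    intro y hy
    rw [projT_eq Ctx ((mem_Sb Ctx).mp hy), Finset.smul_sum]
    simp only [smul_smul]
  rw [h1, Finset.sum_congr rfl h2, Finset.sum_comm, Finset.smul_sum]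
  refine Finset.sum_congr rfl fun x _ => ?_
  rw [← Finset.sum_smul, smul_smul]
  congr 1
  simp only [map_mul, Finset.mul_sum]

lemma c_eq' {w : W} (hw : FullyCommutative cs w) :
    Ctx.c w = ∑ x ∈ Sfc Ctx w,
      ((LaurentPolynomial.T (-(cs.length x : ℤ)) : A) * Ctx.Lq x w)
        • Ctx.proj (Ctx.Tw x) := by
  rw [Ctx.c_eq w hw, finsum_mem_eq_finite_toFinset_sum _ (fcset_finite Ctx w)]
  rfl

lemma key_fc (hstar : Ctx.Star) {w : W} (hw : FullyCommutative cs w) {x : W}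
    (hx : FullyCommutative cs x) (hxw : bruhatLE cs x w) :
    (LaurentPolynomial.T (-(cs.length w : ℤ)) : A)
        * ∑ y ∈ Sb Ctx w, Polynomial.aeval q (Ctx.P y w * Ctx.D x y)
      = (LaurentPolynomial.T (-(cs.length x : ℤ)) : A) * Ctx.Lq x w := by
  have h := (projKL_eq Ctx w).symm.trans ((hstar.1 w hw).trans (c_eq' Ctx hw))
  exact indep_ext Ctx (Sfc Ctx w) (fun y hy => ((mem_Sfc Ctx).mp hy).1) _ _ h x
    ((mem_Sfc Ctx).mpr ⟨hx, hxw⟩)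

lemma key_nfc (hstar : Ctx.Star) {w : W} (hw : ¬ FullyCommutative cs w) {x : W}
    (hx : FullyCommutative cs x) (hxw : bruhatLE cs x w) :
    ∑ y ∈ Sb Ctx w, Ctx.P y w * Ctx.D x y = 0 := by
  have h : ∑ z ∈ Sfc Ctx w,
      (LaurentPolynomial.T (-(cs.length w : ℤ))
          * ∑ y ∈ Sb Ctx w, Polynomial.aeval q (Ctx.P y w * Ctx.D z y))
        • Ctx.proj (Ctx.Tw z) = ∑ z ∈ Sfc Ctx w, (0:A) • Ctx.proj (Ctx.Tw z) := by
    rw [← projKL_eq, hstar.2 w hw]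
    simp
  have h2 := indep_ext Ctx (Sfc Ctx w) (fun y hy => ((mem_Sfc Ctx).mp hy).1) _ _ h x
    ((mem_Sfc Ctx).mpr ⟨hx, hxw⟩)
  have h3 : (Polynomial.aeval q (∑ y ∈ Sb Ctx w, Ctx.P y w * Ctx.D x y) : A) = 0 := by
    rw [map_sum]
    calc (∑ y ∈ Sb Ctx w, Polynomial.aeval q (Ctx.P y w * Ctx.D x y) : A)
        = (LaurentPolynomial.T ((cs.length w : ℤ)) : A)
            * ((LaurentPolynomial.T (-(cs.length w : ℤ)) : A)
              * ∑ y ∈ Sb Ctx w, Polynomial.aeval q (Ctx.P y w * Ctx.D x y)) := by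
          rw [← mul_assoc, ← T_add]
          simp
      _ = 0 := by rw [h2, mul_zero]
  exact aeval_q_injective (by rw [h3, map_zero])

lemma D_eq_zero_of_fc {w x : W} (hw : FullyCommutative cs w)
    (hx : FullyCommutative cs x) (hxw : bruhatLE cs x w) (hne : x ≠ w) :
    Ctx.D x w = 0 := by
  classical
  have hwmem : w ∈ Sfc Ctx w := (mem_Sfc Ctx).mpr ⟨hw, bruhatLE_refl w⟩
  have h : ∑ y ∈ Sfc Ctx w, (Polynomial.aeval q (Ctx.D y w)) • Ctx.proj (Ctx.Tw y)
      = ∑ y ∈ Sfc Ctx w, (if y = w then (1:A) else 0) • Ctx.proj (Ctx.Tw y) := by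
    rw [← projT_eq Ctx (bruhatLE_refl w)]
    have : ∑ y ∈ Sfc Ctx w, (if y = w then (1:A) else 0) • Ctx.proj (Ctx.Tw y)
        = ∑ y ∈ Sfc Ctx w, (if y = w then Ctx.proj (Ctx.Tw y) else 0) := by
      refine Finset.sum_congr rfl fun y _ => ?_
      split <;> simp
    rw [this, Finset.sum_ite_eq' (Sfc Ctx w) w, if_pos hwmem]
  have h2 := indep_ext Ctx (Sfc Ctx w) (fun y hy => ((mem_Sfc Ctx).mp hy).1) _ _ h x
    ((mem_Sfc Ctx).mpr ⟨hx, hxw⟩)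
  rw [if_neg hne] at h2
  exact aeval_q_injective (by rw [h2, map_zero])

lemma D_bound (hstar : Ctx.Star) :
    ∀ (y x : W), FullyCommutative cs x → bruhatLT cs x y →
      2 * (Ctx.D x y).natDegree + 1 + cs.length x ≤ cs.length y := by
  suffices h : ∀ (n : ℕ) (y : W), cs.length y ≤ n → ∀ x, FullyCommutative cs x →
      bruhatLT cs x y → 2 * (Ctx.D x y).natDegree + 1 + cs.length x ≤ cs.length y by
    exact fun y x hx hxy => h (cs.length y) y le_rfl x hx hxy
  intro n
  induction n with
  | zero =>
    intro y hy x hx hxy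
    have := length_lt_of_bruhatLT hxy
    omega
  | succ n ih =>
    intro y hy x hx hxy
    classical
    have hlt := length_lt_of_bruhatLT hxy
    by_cases hyfc : FullyCommutative cs y
    · rw [D_eq_zero_of_fc Ctx hyfc hx hxy.1 hxy.2]
      simp only [Polynomial.natDegree_zero]
      omega
    · have hsum := key_nfc Ctx hstar hyfc hx hxy.1
      have hymem : y ∈ Sb Ctx y := (mem_Sb Ctx).mpr (bruhatLE_refl y)
      rw [← Finset.add_sum_erase _ _ hymem, Ctx.P_self, one_mul] at hsum
      have hD : Ctx.D x y = -∑ u ∈ (Sb Ctx y).erase y, Ctx.P u y * Ctx.D x u :=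
        eq_neg_of_add_eq_zero_left hsum
      rw [hD, Polynomial.natDegree_neg]
      have hbound : (∑ u ∈ (Sb Ctx y).erase y, Ctx.P u y * Ctx.D x u).natDegree
          ≤ (cs.length y - cs.length x - 1) / 2 := by
        refine Polynomial.natDegree_sum_le_of_forall_le _ _ ?_
        intro u hu
        have hune : u ≠ y := (Finset.mem_erase.mp hu).1
        have huley : bruhatLE cs u y := (mem_Sb Ctx).mp (Finset.mem_erase.mp hu).2
        by_cases hcase : FullyCommutative cs x ∧ bruhatLE cs x u
        swap
        · rw [Ctx.D_eq_zero x u hcase, mul_zero]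
          simp
        by_cases hux : u = x
        · subst hux
          rw [Ctx.D_self u hx, mul_one]
          have hp := Ctx.P_degree u y hxy
          rw [Nat.le_div_iff_mul_le (by norm_num : 0 < 2)]
          omega
        · have hxu : bruhatLT cs x u := ⟨hcase.2, fun hh => hux hh.symm⟩
          have huy : bruhatLT cs u y := ⟨huley, hune⟩
          have h1 := Ctx.P_degree u y huy
          have h2 : cs.length u < cs.length y := length_lt_of_bruhatLT huy
          have h3 := ih u (by omega) x hx hxu
          have h4 := Polynomial.natDegree_mul_le (p := Ctx.P u y) (q := Ctx.D x u)
          rw [Nat.le_div_iff_mul_le (by norm_num : 0 < 2)]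
          omega
      omega

end TLContext

open TLContext in
/-- Proposition (paper, Prop. `muu`): if `X` satisfies (★) and `x, w ∈ W_c`, then the
coefficient `M(x,w)` of `q^{-1/2}` in `L_{x,w}(q^{-1/2})` equals the coefficient
`μ(x,w)` of `q^{(ℓ(w)-ℓ(x)-1)/2}` in the Kazhdan--Lusztig polynomial `P_{x,w}(q)`.
(Recall that `L x w` is a polynomial in the variable `v = q^{-1/2}`, so `M(x,w)` is its
coefficient of degree `1`.) -/
theorem statement19 {B : Type*} {W : Type*} [Group W] {M : CoxeterMatrix B} {cs : CoxeterSystem M W}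
    {H : Type*} [Ring H] [Algebra A H] {TL : Type*} [Ring TL] [Algebra A TL]
    (Ctx : TLContext cs H TL)
    (hstar : Ctx.Star) (x w : W)
    (hx : FullyCommutative cs x) (hw : FullyCommutative cs w) :
    (Ctx.L x w).coeff 1 = Ctx.mu x w := by
  classical
  by_cases hxwle : bruhatLE cs x w
  · by_cases hxweq : x = w
    · subst hxweq
      rw [Ctx.L_self x, TLContext.mu, if_neg (by simp), Polynomial.coeff_one]
      norm_num
    · -- main case : `x < w`
      have hlt : cs.length x < cs.length w := length_lt_of_bruhatLT ⟨hxwle, hxweq⟩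
      set N : ℕ := cs.length w - cs.length x with hN
      have hk := key_fc Ctx hstar hw hx hxwle
      set F : Polynomial ℤ := ∑ y ∈ Sb Ctx w, Ctx.P y w * Ctx.D x y with hF
      have hk2 : (Polynomial.aeval q F : A)
          = LaurentPolynomial.T ((N:ℤ)) * Ctx.Lq x w := by
        have e1 : (Polynomial.aeval q F : A)
            = (LaurentPolynomial.T ((cs.length w : ℤ)) : A)
              * ((LaurentPolynomial.T (-(cs.length w : ℤ)) : A)
                * ∑ y ∈ Sb Ctx w, Polynomial.aeval q (Ctx.P y w * Ctx.D x y)) := by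
          rw [hF, map_sum, ← mul_assoc, ← T_add]
          simp
        rw [e1, hk, ← mul_assoc, ← T_add]
        congr 2
        omega
      have hcoeff : (Polynomial.aeval q F : A).coeff ((N:ℤ) - 1) = (Ctx.L x w).coeff 1 := by
        rw [hk2]
        have := coeffA_T_mul_aevalTneg (Ctx.L x w) (N:ℤ) 1
        rw [TLContext.Lq]
        simpa using this
      by_cases hodd : Odd N
      · obtain ⟨k, hkk⟩ := hodd
        have he : ((N:ℤ) - 1) = 2 * (k:ℤ) := by push_cast; omega
        rw [he, coeffA_aeval_q_even] at hcoeff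
        have hxmem : x ∈ Sb Ctx w := (mem_Sb Ctx).mpr hxwle
        have hFc : F.coeff k = (Ctx.P x w).coeff k := by
          rw [hF, Polynomial.finset_sum_coeff]
          rw [Finset.sum_eq_single_of_mem x hxmem ?_]
          · rw [Ctx.D_self x hx, mul_one]
          · intro y hy hyx
            have hylew : bruhatLE cs y w := (mem_Sb Ctx).mp hy
            by_cases hyw : y = w
            · subst hyw
              rw [D_eq_zero_of_fc Ctx hw hx hxwle hxweq, mul_zero, Polynomial.coeff_zero]
            · by_cases hD0 : FullyCommutative cs x ∧ bruhatLE cs x y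
              · have h1 := Ctx.P_degree y w ⟨hylew, hyw⟩
                have h2 := D_bound Ctx hstar y x hx ⟨hD0.2, fun hh => hyx hh.symm⟩
                have h3 := Polynomial.natDegree_mul_le (p := Ctx.P y w) (q := Ctx.D x y)
                have h4 : cs.length y ≤ cs.length w := length_le_of_bruhatLE hylew
                apply Polynomial.coeff_eq_zero_of_natDegree_lt
                omega
              · rw [Ctx.D_eq_zero x y hD0, mul_zero, Polynomial.coeff_zero]
        have hmu : Ctx.mu x w = (Ctx.P x w).coeff k := by
          rw [TLContext.mu, if_pos (by rw [← hN]; exact ⟨k, hkk⟩)]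
          congr 1
          omega
        rw [← hcoeff, hFc, hmu]
      · have hdvd : ¬ ((2:ℤ) ∣ ((N:ℤ) - 1)) := by
          rcases Nat.even_or_odd N with he | ho
          · obtain ⟨m, hm⟩ := he
            intro ⟨c, hc⟩
            have : (N:ℤ) = (m:ℤ) + m := by rw [hm]; push_cast; ring
            omega
          · exact absurd ho hodd
        rw [coeffA_aeval_q_odd F _ hdvd] at hcoeff
        rw [← hcoeff, TLContext.mu, if_neg (by rw [← hN]; exact hodd)]
  · rw [Ctx.L_eq_zero x w (fun hh => hxwle hh.2.2), Polynomial.coeff_zero,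
      TLContext.mu, Ctx.P_eq_zero x w hxwle, Polynomial.coeff_zero]
    simp

end TLPaper
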